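/- Fix an integer p≥2. For all w=(w₁,w₂)∈ℍ² one has Σ_{α∈𝒮*} ε(α)·θ₂(α;w) = (1/p²)·Σ_{δ∈{0,1}} Θ₁(2p, 1+δp, 2p; w₁/p)·Θ₁(6p, 3+3δp, 6p; w₂/p). -/

import Mathlib

noncomputable section

open Complex MeasureTheory Real Filter Topology

namespace QMF

/-- Principal-branch kernel `(-i(w+τ))^e`. -/
def ker (w τ e : ℂ) : ℂ := (-I * (w + τ)) ^ e

/-- `∫_a^{i∞} f(w)·(-i(w+τ))^e dw` along the vertical path `w = a + it`, `t ∈ (0,∞)`. -/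
def lineInt (f : ℂ → ℂ) (e a τ : ℂ) : ℂ :=
  ∫ t in Set.Ioi (0 : ℝ), f (a + I * t) * ker (a + I * t) τ e * I

/-- Non-holomorphic Eichler integral `∫_{-τ̄}^{i∞} f(w)·(-i(w+τ))^e dw`. -/
def EichI (f : ℂ → ℂ) (e τ : ℂ) : ℂ := lineInt f e (-(starRingEnd ℂ τ)) τ

/-- Theta integral `r_f(τ) = ∫_0^{i∞} f(w)·(-i(w+τ))^e dw`. -/
def rInt (f : ℂ → ℂ) (e τ : ℂ) : ℂ := lineInt f e 0 τ

/-- Double iterated integral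
`∫_a^{i∞}∫_{w₁}^{i∞} F(w₁,w₂)·(-i(w₁+τ))^{e₁}·(-i(w₂+τ))^{e₂} dw₂ dw₁`
along vertical paths `w₁ = a + it₁`, `w₂ = w₁ + it₂`. -/
def dblInt (F : ℂ → ℂ → ℂ) (e₁ e₂ a τ : ℂ) : ℂ :=
  ∫ t₁ in Set.Ioi (0 : ℝ), ∫ t₂ in Set.Ioi (0 : ℝ),
    F (a + I * t₁) (a + I * t₁ + I * t₂) *
      ker (a + I * t₁) τ e₁ * ker (a + I * t₁ + I * t₂) τ e₂ * (I * I)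

/-- Double Eichler integral `∫_{-τ̄}^{i∞}∫_{w₁}^{i∞}`. -/
def dblEich (F : ℂ → ℂ → ℂ) (e₁ e₂ τ : ℂ) : ℂ := dblInt F e₁ e₂ (-(starRingEnd ℂ τ)) τ

/-- Double theta integral `∫_0^{i∞}∫_{w₁}^{i∞}`. -/
def dblR (F : ℂ → ℂ → ℂ) (e₁ e₂ τ : ℂ) : ℂ := dblInt F e₁ e₂ 0 τ

/-- The weight-3/2 unary theta function `f_{j,p}`. -/
def fjp (p j : ℕ) (τ : ℂ) : ℂ :=
  (1 / (2 * (p : ℂ))) * ∑' n : ℤ,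
    if n % (2 * (p : ℤ)) = (j : ℤ) % (2 * (p : ℤ)) then
      (n : ℂ) * Complex.exp (2 * (π : ℂ) * I * τ * (n : ℂ) ^ 2 / (4 * (p : ℂ)))
    else 0

/-- Upper incomplete gamma function `Γ(s,x) = ∫_x^∞ e^{-t} t^{s-1} dt`. -/
def incGamma (s x : ℝ) : ℝ := ∫ t in Set.Ioi x, Real.exp (-t) * t ^ (s - 1)

/-- The non-holomorphic Eichler integral companion `F^*_{j,p}`. -/
def Fstar (p j : ℕ) (τ : ℂ) : ℂ :=
  (1 / ((Real.sqrt π : ℝ) : ℂ)) * ∑' n : ℤ,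
    if n % (2 * (p : ℤ)) = (j : ℤ) % (2 * (p : ℤ)) then
      (n.sign : ℂ) * ((incGamma (1/2) (π * (n : ℝ) ^ 2 * τ.im / p) : ℝ) : ℂ) *
        Complex.exp (-(2 * (π : ℂ) * I * τ * (n : ℂ) ^ 2 / (4 * (p : ℂ))))
    else 0

/-- Shimura's theta function `Θ_ν(A,h,N;τ)`. -/
def ShTheta (ν A : ℕ) (h : ℤ) (N : ℕ) (τ : ℂ) : ℂ :=
  ∑' m : ℤ, if m % (N : ℤ) = h % (N : ℤ) then
    (m : ℂ) ^ ν * Complex.exp ((π : ℂ) * I * τ * (A : ℂ) * (m : ℂ) ^ 2 / (N : ℂ) ^ 2)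
  else 0

/-- `ζ_n^e = e^{2πie/n}`. -/
def zeta (n : ℕ) (e : ℤ) : ℂ := Complex.exp (2 * (π : ℂ) * I * (e : ℂ) / (n : ℂ))

/-- Component `α + m` of a shifted lattice point, as a complex number. -/
def nv (a : ℝ) (m : ℤ) : ℂ := ((a + (m : ℝ) : ℝ) : ℂ)

/-- `θ₁(α;w)`. -/
def theta1 (α : ℝ × ℝ) (w₁ w₂ : ℂ) : ℂ :=
  ∑' m : ℤ × ℤ,
    (2 * nv α.1 m.1 + nv α.2 m.2) * nv α.2 m.2 *
      Complex.exp (3 * (π : ℂ) * I / 2 * (2 * nv α.1 m.1 + nv α.2 m.2) ^ 2 * w₁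
        + (π : ℂ) * I / 2 * (nv α.2 m.2) ^ 2 * w₂)

/-- `θ₂(α;w)`. -/
def theta2 (α : ℝ × ℝ) (w₁ w₂ : ℂ) : ℂ :=
  ∑' m : ℤ × ℤ,
    (3 * nv α.1 m.1 + 2 * nv α.2 m.2) * nv α.1 m.1 *
      Complex.exp ((π : ℂ) * I / 2 * (3 * nv α.1 m.1 + 2 * nv α.2 m.2) ^ 2 * w₁
        + 3 * (π : ℂ) * I / 2 * (nv α.1 m.1) ^ 2 * w₂)

/-- `θ₃(α;w)`. -/
def theta3 (α : ℝ × ℝ) (w₁ w₂ : ℂ) : ℂ :=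
  ∑' m : ℤ × ℤ,
    (2 * nv α.1 m.1 + nv α.2 m.2) *
      Complex.exp (3 * (π : ℂ) * I / 2 * (2 * nv α.1 m.1 + nv α.2 m.2) ^ 2 * w₁
        + (π : ℂ) * I / 2 * (nv α.2 m.2) ^ 2 * w₂)

/-- `θ₄(α;w)`. -/
def theta4 (α : ℝ × ℝ) (w₁ w₂ : ℂ) : ℂ :=
  ∑' m : ℤ × ℤ,
    (3 * nv α.1 m.1 + 2 * nv α.2 m.2) *
      Complex.exp ((π : ℂ) * I / 2 * (3 * nv α.1 m.1 + 2 * nv α.2 m.2) ^ 2 * w₁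
        + 3 * (π : ℂ) * I / 2 * (nv α.1 m.1) ^ 2 * w₂)

/-- `θ₅(α;w)`. -/
def theta5 (α : ℝ × ℝ) (w₁ w₂ : ℂ) : ℂ :=
  ∑' m : ℤ × ℤ,
    nv α.1 m.1 *
      Complex.exp ((π : ℂ) * I / 2 * (3 * nv α.1 m.1 + 2 * nv α.2 m.2) ^ 2 * w₁
        + 3 * (π : ℂ) * I / 2 * (nv α.1 m.1) ^ 2 * w₂)

/-- `𝓔_{1,α}(τ)`. -/
def E1a (α : ℝ × ℝ) (τ : ℂ) : ℂ :=
  -((Real.sqrt 3 : ℂ) / 4) *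
    dblEich (fun w₁ w₂ => theta1 α w₁ w₂ + theta2 α w₁ w₂) (-(1/2)) (-(1/2)) τ

/-- `𝓔₁(τ) = Σ_{α ∈ 𝒮*} ε(α)·𝓔_{1,α}(pτ)`. -/
def E1 (p : ℕ) (τ : ℂ) : ℂ :=
  (-2) * E1a (1 - 1/(p:ℝ), 2/(p:ℝ)) ((p:ℂ) * τ)
    + E1a (0, 1 - 1/(p:ℝ)) ((p:ℂ) * τ) + E1a (1/(p:ℝ), 1 - 1/(p:ℝ)) ((p:ℂ) * τ)

/-- `H_{1,α}(τ)`. -/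
def H1 (α : ℝ × ℝ) (τ : ℂ) : ℂ :=
  -(Real.sqrt 3 : ℂ) *
    dblR (fun w₁ w₂ => theta1 α w₁ w₂ + theta2 α w₁ w₂) (-(1/2)) (-(1/2)) τ

/-- `𝓔_{2,α}(τ)`. -/
def E2a (α : ℝ × ℝ) (τ : ℂ) : ℂ :=
  (Real.sqrt 3 : ℂ) / (8 * (π : ℂ)) *
      dblEich (fun w₁ w₂ => 2 * theta3 α w₁ w₂ - theta4 α w₁ w₂) (-(1/2)) (-(3/2)) τ
    + (Real.sqrt 3 : ℂ) / (8 * (π : ℂ)) *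
      dblEich (fun w₁ w₂ => theta5 α w₁ w₂) (-(3/2)) (-(1/2)) τ

/-- `𝓔₂(τ) = Σ_{α ∈ 𝒮*} 𝓔_{2,α}(pτ)`. -/
def E2 (p : ℕ) (τ : ℂ) : ℂ :=
  E2a (1 - 1/(p:ℝ), 2/(p:ℝ)) ((p:ℂ) * τ)
    + E2a (0, 1 - 1/(p:ℝ)) ((p:ℂ) * τ) + E2a (1/(p:ℝ), 1 - 1/(p:ℝ)) ((p:ℂ) * τ)

/-- `H_{2,α}(τ)`. -/
def H2 (α : ℝ × ℝ) (τ : ℂ) : ℂ :=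
  (Real.sqrt 3 : ℂ) * I / (2 * (π : ℂ)) *
      dblR (fun w₁ w₂ => 2 * theta3 α w₁ w₂ - theta4 α w₁ w₂) (-(1/2)) (-(3/2)) τ
    + (Real.sqrt 3 : ℂ) * I / (2 * (π : ℂ)) *
      dblR (fun w₁ w₂ => theta5 α w₁ w₂) (-(3/2)) (-(1/2)) τ

/-- `I_𝐤(τ)`. -/
def Ik (p : ℕ) (k : ℤ × ℤ) (τ : ℂ) : ℂ :=
  -((Real.sqrt 3 : ℂ) / (4 * (p : ℂ))) *
    dblEich (fun w₁ w₂ => ShTheta 1 (2*p) k.1 (2*p) w₁ * ShTheta 1 (6*p) k.2 (6*p) w₂)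
      (-(1/2)) (-(1/2)) τ

/-- `J_𝐤(τ) = Σ_{δ∈{0,1}} I_{(k₁+δp, k₂+3δp)}(τ)`. -/
def Jk (p : ℕ) (k : ℤ × ℤ) (τ : ℂ) : ℂ :=
  ∑ δ ∈ Finset.range 2, Ik p (k.1 + (δ:ℤ) * p, k.2 + 3 * (δ:ℤ) * p) τ

/-- `r_𝐤(τ)`. -/
def rk (p : ℕ) (k : ℤ × ℤ) (τ : ℂ) : ℂ :=
  dblR (fun w₁ w₂ => ShTheta 1 (2*p) k.1 (2*p) w₁ * ShTheta 1 (6*p) k.2 (6*p) w₂)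
    (-(1/2)) (-(1/2)) τ

/-- `𝓘_𝐤(τ)`. -/
def cI (p : ℕ) (k : ℤ × ℤ) (τ : ℂ) : ℂ :=
  -((Real.sqrt 3 : ℂ) / (8 * (π : ℂ))) *
    dblEich (fun w₁ w₂ => ShTheta 1 (2*p) k.1 (2*p) w₁ * ShTheta 0 (6*p) k.2 (6*p) w₂)
      (-(1/2)) (-(3/2)) τ

/-- `𝓙_𝐤(τ) = Σ_{δ∈{0,1}} 𝓘_{(k₁+pδ, k₂+3pδ)}(τ)`. -/
def cJ (p : ℕ) (k : ℤ × ℤ) (τ : ℂ) : ℂ :=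
  ∑ δ ∈ Finset.range 2, cI p (k.1 + (δ:ℤ) * p, k.2 + 3 * (δ:ℤ) * p) τ

/-- `𝓚_𝐤(τ) = 2𝓙_𝐤(τ) + 𝓙_{((k₁+k₂)/2, (k₂-3k₁)/2)}(τ)`. -/
def cK (p : ℕ) (k : ℤ × ℤ) (τ : ℂ) : ℂ :=
  2 * cJ p k τ + cJ p ((k.1 + k.2)/2, (k.2 - 3*k.1)/2) τ

/-- `R_𝐤(τ)`. -/
def Rk (p : ℕ) (k : ℤ × ℤ) (τ : ℂ) : ℂ :=
  dblR (fun w₁ w₂ => ShTheta 1 (2*p) k.1 (2*p) w₁ * ShTheta 0 (6*p) k.2 (6*p) w₂)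
    (-(1/2)) (-(3/2)) τ

/-- `𝓕_α(x)`. -/
def Fcal (α x : ℝ) : ℝ := Real.sinh (2*π*x) / (Real.cosh (2*π*x) - Real.cos (2*π*α))

/-- `𝒢_α(x)`. -/
def Gcal (α x : ℝ) : ℝ := Real.sin (2*π*α) / (Real.cosh (2*π*x) - Real.cos (2*π*α))

/-- `𝒢*_α(x) = x·𝒢_α(x)`. -/
def Gstar (α x : ℝ) : ℝ := x * Gcal α x

/-- `a` is an integer. -/
def isInt (a : ℝ) : Prop := ∃ n : ℤ, a = (n : ℝ)

open Classical in
/-- The function `g_{1,α}`. -/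
def g1 (α w : ℝ × ℝ) : ℝ :=
  if isInt α.1 then
    -2 * Fcal 0 w.1 * Fcal α.2 w.2 + 2/(π * w.1) * Fcal α.2 (w.2 + 3*w.1/2)
  else if isInt α.2 then
    -2 * Fcal α.1 w.1 * Fcal 0 w.2 + 2/(π * w.2) * Fcal α.1 (w.1 + w.2/2)
  else
    2 * Gcal α.1 w.1 * Gcal α.2 w.2 - 2 * Fcal α.1 w.1 * Fcal α.2 w.2

open Classical in
/-- The function `g_{2,α}`. -/
def g2 (α w : ℝ × ℝ) : ℂ :=
  if isInt α.1 then
    -2 * I * ((Fcal 0 w.1 * Gstar α.2 w.2 - 1/(π*w.1) * Gstar α.2 (w.2 + 3*w.1/2) : ℝ) : ℂ)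
  else
    -2 * I * ((w.2 : ℝ) : ℂ) *
      ((Gcal α.1 w.1 * Fcal α.2 w.2 + Fcal α.1 w.1 * Gcal α.2 w.2 : ℝ) : ℂ)

/-- The quadratic form `Q(w) = 3w₁² + w₂² + 3w₁w₂`. -/
def Qf (w : ℝ × ℝ) : ℝ := 3*w.1^2 + w.2^2 + 3*w.1*w.2

/-- The function `M₂(κ; u₁, u₂)`, defined by a double contour integral over
horizontal lines `ℝ - iu₂` (outer) and `ℝ - iu₁` (inner). -/
def M2 (κ u₁ u₂ : ℝ) : ℂ :=
  -(1/(π:ℂ)^2) * ∫ t₂ : ℝ, ∫ t₁ : ℝ,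
    Complex.exp (-(π:ℂ) * ((t₁:ℂ) - I*(u₁:ℂ))^2 - (π:ℂ) * ((t₂:ℂ) - I*(u₂:ℂ))^2
        - 2*(π:ℂ)*I*((u₁:ℂ)*((t₁:ℂ) - I*(u₁:ℂ)) + (u₂:ℂ)*((t₂:ℂ) - I*(u₂:ℂ)))) /
      (((t₂:ℂ) - I*(u₂:ℂ)) * (((t₁:ℂ) - I*(u₁:ℂ)) - (κ:ℂ)*((t₂:ℂ) - I*(u₂:ℂ))))



private lemma summable_norm_theta_aux (τ : ℂ) (hτ : 0 < τ.im) :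
    Summable fun n : ℤ => ‖(n : ℂ) * Complex.exp ((π : ℂ) * I * (n:ℂ)^2 * τ)‖ := by
  refine (summable_pow_mul_jacobiTheta₂_term_bound 0 hτ 1).of_nonneg_of_le
    (fun n => norm_nonneg _) fun n => ?_
  rw [norm_mul, Complex.norm_exp]
  have h1 : ((π : ℂ) * I * (n:ℂ)^2 * τ).re = -(π * (τ.im * n^2 - 2*0*|(n:ℤ)|)) := by
    simp [pow_two, Complex.mul_re, Complex.mul_im]
    ring
  rw [h1]
  have h2 : ‖((n:ℤ):ℂ)‖ = (|n| : ℝ) := by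
    rw [Complex.norm_intCast]
  rw [h2]
  apply le_of_eq
  norm_num

private def G1 (p : ℕ) (w₁ : ℂ) (A : ℤ) : ℂ :=
  (A:ℂ) * Complex.exp ((π : ℂ) * I * w₁ * (A:ℂ)^2 / (2*(p:ℂ)^2))

private def G2 (p : ℕ) (w₂ : ℂ) (B : ℤ) : ℂ :=
  (B:ℂ) * Complex.exp (3 * (π : ℂ) * I * w₂ * (B:ℂ)^2 / (2*(p:ℂ)^2))

private lemma imdiv (p : ℕ) (hp : 0 < p) (w : ℂ) (hw : 0 < w.im) :
    0 < (w / (2*(p:ℂ)^2)).im := by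
  rw [show 2*(p:ℂ)^2 = ((2*(p:ℝ)^2 : ℝ) : ℂ) by push_cast; ring, Complex.div_ofReal_im]
  have : (0:ℝ) < (p:ℝ) := by exact_mod_cast hp
  positivity

private lemma sumG1 (p : ℕ) (hp : 0 < p) (w₁ : ℂ) (h₁ : 0 < w₁.im) :
    Summable fun A : ℤ => ‖G1 p w₁ A‖ := by
  refine (summable_norm_theta_aux (w₁ / (2*(p:ℂ)^2)) (imdiv p hp w₁ h₁)).congr fun n => ?_
  unfold G1
  rw [show (π : ℂ) * I * w₁ * (n:ℂ)^2 / (2*(p:ℂ)^2)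
      = (π : ℂ) * I * (n:ℂ)^2 * (w₁ / (2*(p:ℂ)^2)) by ring]

private lemma sumG2 (p : ℕ) (hp : 0 < p) (w₂ : ℂ) (h₂ : 0 < w₂.im) :
    Summable fun B : ℤ => ‖G2 p w₂ B‖ := by
  have h3 : 0 < ((3*w₂) / (2*(p:ℂ)^2)).im := by
    refine imdiv p hp (3*w₂) ?_
    have h4 : ((3:ℂ)*w₂).im = 3*w₂.im := by simp [Complex.mul_im]
    rw [h4]
    linarith
  refine (summable_norm_theta_aux ((3*w₂) / (2*(p:ℂ)^2)) h3).congr fun n => ?_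
  unfold G2
  rw [show 3 * (π : ℂ) * I * w₂ * (n:ℂ)^2 / (2*(p:ℂ)^2)
      = (π : ℂ) * I * (n:ℂ)^2 * ((3*w₂) / (2*(p:ℂ)^2)) by ring]

private lemma G2_neg (p : ℕ) (w₂ : ℂ) (B : ℤ) : G2 p w₂ (-B) = - G2 p w₂ B := by
  unfold G2
  rw [show ((-B : ℤ) : ℂ) = -(B:ℂ) by push_cast; ring]
  rw [show (-(B:ℂ))^2 = (B:ℂ)^2 by ring]
  ring

set_option maxHeartbeats 1600000 in
/-- the `ε`-weighted sum of `θ₂` over `𝒮*` as a product of Shimura thetas. -/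
theorem stmt8 (p : ℕ) (hp : 2 ≤ p) (w₁ w₂ : ℂ) (h₁ : 0 < w₁.im) (h₂ : 0 < w₂.im) :
    (-2) * theta2 (1 - 1/(p:ℝ), 2/(p:ℝ)) w₁ w₂
      + theta2 (0, 1 - 1/(p:ℝ)) w₁ w₂
      + theta2 (1/(p:ℝ), 1 - 1/(p:ℝ)) w₁ w₂
      = (1/(p:ℂ)^2) * ∑ δ ∈ Finset.range 2,
          ShTheta 1 (2*p) (1 + (δ:ℤ)*p) (2*p) (w₁/p) *
          ShTheta 1 (6*p) (3 + 3*(δ:ℤ)*p) (6*p) (w₂/p) := by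
  have hppos : 0 < p := by omega
  have hpR : (0:ℝ) < (p:ℝ) := by exact_mod_cast hppos
  have hq : (p:ℂ) ≠ 0 := by
    exact Nat.cast_ne_zero.mpr (by omega)
  have hpz : ((p:ℤ)) ≠ 0 := by exact_mod_cast (by omega : p ≠ 0)
  have hg1n := sumG1 p hppos w₁ h₁
  have hg2n := sumG2 p hppos w₂ h₂
  have hg1 : Summable (G1 p w₁) := hg1n.of_norm
  have hg2 : Summable (G2 p w₂) := hg2n.of_norm
  have hprod : Summable (fun z : ℤ × ℤ => G1 p w₁ z.1 * G2 p w₂ z.2) :=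
    summable_mul_of_summable_norm hg1n hg2n
  -- Step 1 : theta2 in terms of G1, G2
  have hth : ∀ (a₁ a₂ : ℝ) (c₁ c₂ : ℤ), a₁ = (c₁:ℝ)/(p:ℝ) → a₂ = (c₂:ℝ)/(p:ℝ) →
      theta2 (a₁, a₂) w₁ w₂ = (1/(p:ℂ)^2) * ∑' m : ℤ × ℤ,
        G1 p w₁ (3*c₁+2*c₂+(p:ℤ)*(3*m.1+2*m.2)) * G2 p w₂ (c₁+(p:ℤ)*m.1) := by
    intro a₁ a₂ c₁ c₂ ha1 ha2
    rw [theta2, ← tsum_mul_left]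
    refine tsum_congr fun m => ?_
    have hnv1 : nv a₁ m.1 = ((c₁+(p:ℤ)*m.1 : ℤ):ℂ)/(p:ℂ) := by
      unfold nv
      rw [ha1]
      push_cast
      field_simp
    have hnv2 : nv a₂ m.2 = ((c₂+(p:ℤ)*m.2 : ℤ):ℂ)/(p:ℂ) := by
      unfold nv
      rw [ha2]
      push_cast
      field_simp
    have hA : 3 * nv a₁ m.1 + 2 * nv a₂ m.2
        = ((3*c₁+2*c₂+(p:ℤ)*(3*m.1+2*m.2) : ℤ):ℂ)/(p:ℂ) := by
      rw [hnv1, hnv2]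
      push_cast
      field_simp
      ring
    rw [hA, hnv1]
    unfold G1 G2
    set A : ℤ := 3*c₁+2*c₂+(p:ℤ)*(3*m.1+2*m.2) with hAdef
    set B : ℤ := c₁+(p:ℤ)*m.1 with hBdef
    rw [show (π:ℂ) * I / 2 * ((A:ℂ)/(p:ℂ))^2 * w₁ + 3 * (π:ℂ) * I / 2 * ((B:ℂ)/(p:ℂ))^2 * w₂
        = (π:ℂ) * I * w₁ * (A:ℂ)^2 / (2*(p:ℂ)^2) + 3 * (π:ℂ) * I * w₂ * (B:ℂ)^2 / (2*(p:ℂ)^2) by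
          field_simp]
    rw [Complex.exp_add]
    field_simp
  have e1 : theta2 (1 - 1/(p:ℝ), 2/(p:ℝ)) w₁ w₂ = (1/(p:ℂ)^2) * ∑' m : ℤ × ℤ,
      G1 p w₁ (3*((p:ℤ)-1)+2*2+(p:ℤ)*(3*m.1+2*m.2)) * G2 p w₂ (((p:ℤ)-1)+(p:ℤ)*m.1) :=
    hth _ _ ((p:ℤ)-1) 2 (by push_cast; try field_simp; try ring) (by push_cast; try field_simp; try ring)
  have e2 : theta2 (0, 1 - 1/(p:ℝ)) w₁ w₂ = (1/(p:ℂ)^2) * ∑' m : ℤ × ℤ,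
      G1 p w₁ (3*0+2*((p:ℤ)-1)+(p:ℤ)*(3*m.1+2*m.2)) * G2 p w₂ (0+(p:ℤ)*m.1) :=
    hth _ _ 0 ((p:ℤ)-1) (by push_cast; try field_simp; try ring) (by push_cast; try field_simp; try ring)
  have e3 : theta2 (1/(p:ℝ), 1 - 1/(p:ℝ)) w₁ w₂ = (1/(p:ℂ)^2) * ∑' m : ℤ × ℤ,
      G1 p w₁ (3*1+2*((p:ℤ)-1)+(p:ℤ)*(3*m.1+2*m.2)) * G2 p w₂ (1+(p:ℤ)*m.1) :=
    hth _ _ 1 ((p:ℤ)-1) (by push_cast; try field_simp; try ring) (by push_cast; try field_simp; try ring)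
  -- Step 2 : the middle sum vanishes via an involution
  have hzero : (∑' m : ℤ × ℤ,
      G1 p w₁ (3*0+2*((p:ℤ)-1)+(p:ℤ)*(3*m.1+2*m.2)) * G2 p w₂ (0+(p:ℤ)*m.1)) = 0 := by
    set F : ℤ × ℤ → ℂ := fun m =>
      G1 p w₁ (3*0+2*((p:ℤ)-1)+(p:ℤ)*(3*m.1+2*m.2)) * G2 p w₂ (0+(p:ℤ)*m.1) with hF
    have hinv : Function.Involutive (fun m : ℤ × ℤ => (-m.1, m.2 + 3*m.1)) := by
      intro m
      obtain ⟨a, b⟩ := m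
      simp only [Prod.mk.injEq]
      omega
    let e : (ℤ × ℤ) ≃ (ℤ × ℤ) := Function.Involutive.toPerm _ hinv
    have he : ∀ m : ℤ × ℤ, F (e m) = - F m := by
      intro m
      obtain ⟨a, b⟩ := m
      show G1 p w₁ (3*0+2*((p:ℤ)-1)+(p:ℤ)*(3*(-a)+2*(b+3*a))) * G2 p w₂ (0+(p:ℤ)*(-a))
          = -(G1 p w₁ (3*0+2*((p:ℤ)-1)+(p:ℤ)*(3*a+2*b)) * G2 p w₂ (0+(p:ℤ)*a))
      rw [show 3*0+2*((p:ℤ)-1)+(p:ℤ)*(3*(-a)+2*(b+3*a)) = 3*0+2*((p:ℤ)-1)+(p:ℤ)*(3*a+2*b) by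
            ring,
          show (0+(p:ℤ)*(-a)) = -(0+(p:ℤ)*a) by ring, G2_neg]
      ring
    have h5 : ∑' m, F m = - ∑' m, F m := by
      conv_lhs => rw [← e.tsum_eq F]
      rw [tsum_congr he, tsum_neg]
    have h6 : (2:ℂ) * ∑' m, F m = 0 := by linear_combination h5
    have h7 : (2:ℂ) ≠ 0 := two_ne_zero
    exact (mul_eq_zero.mp h6).resolve_left h7
  -- Step 3 : first sum equals minus the third sum
  have h13 : (∑' m : ℤ × ℤ,
      G1 p w₁ (3*((p:ℤ)-1)+2*2+(p:ℤ)*(3*m.1+2*m.2)) * G2 p w₂ (((p:ℤ)-1)+(p:ℤ)*m.1))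
      = - ∑' m : ℤ × ℤ,
      G1 p w₁ (3*1+2*((p:ℤ)-1)+(p:ℤ)*(3*m.1+2*m.2)) * G2 p w₂ (1+(p:ℤ)*m.1) := by
    set F1 : ℤ × ℤ → ℂ := fun m =>
      G1 p w₁ (3*((p:ℤ)-1)+2*2+(p:ℤ)*(3*m.1+2*m.2)) * G2 p w₂ (((p:ℤ)-1)+(p:ℤ)*m.1) with hF1
    set F3 : ℤ × ℤ → ℂ := fun m =>
      G1 p w₁ (3*1+2*((p:ℤ)-1)+(p:ℤ)*(3*m.1+2*m.2)) * G2 p w₂ (1+(p:ℤ)*m.1) with hF3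
    let σ : (ℤ × ℤ) ≃ (ℤ × ℤ) :=
      ⟨fun m => (-m.1-1, 3*m.1+m.2+2), fun n => (-n.1-1, n.2+3*n.1+1),
        by intro m; obtain ⟨a,b⟩ := m; simp only [Prod.mk.injEq]; omega,
        by intro n; obtain ⟨a,b⟩ := n; simp only [Prod.mk.injEq]; omega⟩
    have hσ : ∀ m : ℤ × ℤ, F3 (σ m) = - F1 m := by
      intro m
      obtain ⟨a, b⟩ := m
      show G1 p w₁ (3*1+2*((p:ℤ)-1)+(p:ℤ)*(3*(-a-1)+2*(3*a+b+2))) * G2 p w₂ (1+(p:ℤ)*(-a-1))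
          = -(G1 p w₁ (3*((p:ℤ)-1)+2*2+(p:ℤ)*(3*a+2*b)) * G2 p w₂ (((p:ℤ)-1)+(p:ℤ)*a))
      rw [show 3*1+2*((p:ℤ)-1)+(p:ℤ)*(3*(-a-1)+2*(3*a+b+2))
            = 3*((p:ℤ)-1)+2*2+(p:ℤ)*(3*a+2*b) by ring,
          show 1+(p:ℤ)*(-a-1) = -(((p:ℤ)-1)+(p:ℤ)*a) by ring, G2_neg]
      ring
    have h5 := σ.tsum_eq F3
    rw [tsum_congr hσ, tsum_neg] at h5
    linear_combination -h5
  -- Step 4 : split the third sum according to the parity of m.1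
  have hsplit : (∑' m : ℤ × ℤ,
      G1 p w₁ (3*1+2*((p:ℤ)-1)+(p:ℤ)*(3*m.1+2*m.2)) * G2 p w₂ (1+(p:ℤ)*m.1))
      = (∑' z : ℤ × ℤ, G1 p w₁ (1+2*(p:ℤ)*z.1) * G2 p w₂ (1+2*(p:ℤ)*z.2))
      + (∑' z : ℤ × ℤ, G1 p w₁ (1+(p:ℤ)+2*(p:ℤ)*z.1) * G2 p w₂ (1+(p:ℤ)+2*(p:ℤ)*z.2)) := by
    set F3 : ℤ × ℤ → ℂ := fun m =>
      G1 p w₁ (3*1+2*((p:ℤ)-1)+(p:ℤ)*(3*m.1+2*m.2)) * G2 p w₂ (1+(p:ℤ)*m.1) with hF3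
    have hι : Function.Injective (fun m : ℤ × ℤ =>
        ((3*1+2*((p:ℤ)-1)+(p:ℤ)*(3*m.1+2*m.2), 1+(p:ℤ)*m.1) : ℤ × ℤ)) := by
      intro m m' h
      simp only [Prod.mk.injEq] at h
      obtain ⟨hA, hB⟩ := h
      have h1 : m.1 = m'.1 := by
        have : (p:ℤ) * m.1 = (p:ℤ) * m'.1 := by linarith
        exact mul_left_cancel₀ hpz this
      have h2 : m.2 = m'.2 := by
        have h3 : (p:ℤ) * (3*m.1+2*m.2) = (p:ℤ) * (3*m'.1+2*m'.2) := by linarith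
        have h4 := mul_left_cancel₀ hpz h3
        omega
      exact Prod.ext h1 h2
    have hsum3 : Summable F3 := by
      have h5 := hprod.comp_injective hι
      exact h5
    have hH0 : Summable ({m : ℤ×ℤ | m.1 % 2 = 0}.indicator F3) := hsum3.indicator _
    have hH1 : Summable ({m : ℤ×ℤ | m.1 % 2 = 1}.indicator F3) := hsum3.indicator _
    have hpt : ∀ m, F3 m = ({m : ℤ×ℤ | m.1 % 2 = 0}.indicator F3) m
        + ({m : ℤ×ℤ | m.1 % 2 = 1}.indicator F3) m := by
      intro m
      by_cases h : m.1 % 2 = 0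
      · rw [Set.indicator_of_mem (show m ∈ {m : ℤ×ℤ | m.1 % 2 = 0} from h),
            Set.indicator_of_notMem (show m ∉ {m : ℤ×ℤ | m.1 % 2 = 1} by
              simp only [Set.mem_setOf_eq]; omega)]
        ring
      · rw [Set.indicator_of_notMem (show m ∉ {m : ℤ×ℤ | m.1 % 2 = 0} from h),
            Set.indicator_of_mem (show m ∈ {m : ℤ×ℤ | m.1 % 2 = 1} by
              simp only [Set.mem_setOf_eq]; omega)]
        ring
    rw [tsum_congr hpt, hH0.tsum_add hH1]
    congr 1
    · -- even part
      have hg : Function.Injective (fun z : ℤ × ℤ => ((2*z.2, z.1-3*z.2-1) : ℤ × ℤ)) := by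
        intro z z' h
        simp only [Prod.mk.injEq] at h
        exact Prod.ext (by omega) (by omega)
      have hsupp : Function.support ({m : ℤ×ℤ | m.1 % 2 = 0}.indicator F3)
          ⊆ Set.range (fun z : ℤ × ℤ => ((2*z.2, z.1-3*z.2-1) : ℤ × ℤ)) := by
        intro m hm
        obtain ⟨m1, m2⟩ := m
        have hmem : m1 % 2 = 0 := by
          have h9 := (Set.indicator_apply_ne_zero.mp (Function.mem_support.mp hm)).1
          simpa using h9
        refine ⟨(m2+3*(m1/2)+1, m1/2), ?_⟩
        simp only [Prod.mk.injEq]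
        constructor <;> omega
      rw [← Function.Injective.tsum_eq hg hsupp]
      refine tsum_congr fun z => ?_
      have hc : ((2*z.2 : ℤ), (z.1-3*z.2-1 : ℤ)) ∈ {m : ℤ×ℤ | m.1 % 2 = 0} := by
        simp only [Set.mem_setOf_eq]
        omega
      rw [Set.indicator_of_mem hc]
      show G1 p w₁ (3*1+2*((p:ℤ)-1)+(p:ℤ)*(3*(2*z.2)+2*(z.1-3*z.2-1))) * G2 p w₂ (1+(p:ℤ)*(2*z.2))
          = _
      rw [show 3*1+2*((p:ℤ)-1)+(p:ℤ)*(3*(2*z.2)+2*(z.1-3*z.2-1)) = 1+2*(p:ℤ)*z.1 by ring,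
          show 1+(p:ℤ)*(2*z.2) = 1+2*(p:ℤ)*z.2 by ring]
    · -- odd part
      have hg : Function.Injective (fun z : ℤ × ℤ => ((1+2*z.2, z.1-3*z.2-2) : ℤ × ℤ)) := by
        intro z z' h
        simp only [Prod.mk.injEq] at h
        exact Prod.ext (by omega) (by omega)
      have hsupp : Function.support ({m : ℤ×ℤ | m.1 % 2 = 1}.indicator F3)
          ⊆ Set.range (fun z : ℤ × ℤ => ((1+2*z.2, z.1-3*z.2-2) : ℤ × ℤ)) := by
        intro m hm
        obtain ⟨m1, m2⟩ := m
        have hmem : m1 % 2 = 1 := by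
          have h9 := (Set.indicator_apply_ne_zero.mp (Function.mem_support.mp hm)).1
          simpa using h9
        refine ⟨(m2+3*((m1-1)/2)+2, (m1-1)/2), ?_⟩
        simp only [Prod.mk.injEq]
        constructor <;> omega
      rw [← Function.Injective.tsum_eq hg hsupp]
      refine tsum_congr fun z => ?_
      have hc : ((1+2*z.2 : ℤ), (z.1-3*z.2-2 : ℤ)) ∈ {m : ℤ×ℤ | m.1 % 2 = 1} := by
        simp only [Set.mem_setOf_eq]
        omega
      rw [Set.indicator_of_mem hc]
      show G1 p w₁ (3*1+2*((p:ℤ)-1)+(p:ℤ)*(3*(1+2*z.2)+2*(z.1-3*z.2-2))) * G2 p w₂ (1+(p:ℤ)*(1+2*z.2))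
          = _
      rw [show 3*1+2*((p:ℤ)-1)+(p:ℤ)*(3*(1+2*z.2)+2*(z.1-3*z.2-2)) = 1+(p:ℤ)+2*(p:ℤ)*z.1 by ring,
          show 1+(p:ℤ)*(1+2*z.2) = 1+(p:ℤ)+2*(p:ℤ)*z.2 by ring]
  -- Step 5 : Shimura theta functions as sums over arithmetic progressions
  have hSh1 : ∀ d : ℤ, ShTheta 1 (2*p) (1 + d*(p:ℤ)) (2*p) (w₁/(p:ℂ))
      = ∑' k : ℤ, G1 p w₁ (1+d*(p:ℤ)+2*(p:ℤ)*k) := by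
    intro d
    rw [ShTheta]
    have hinj : Function.Injective (fun k : ℤ => 1+d*(p:ℤ)+2*(p:ℤ)*k) := by
      intro a b h
      simp only at h
      have h2 : (2*(p:ℤ)) * a = (2*(p:ℤ)) * b := by linarith
      exact mul_left_cancel₀ (by omega : (2*(p:ℤ)) ≠ 0) h2
    have hsupp : Function.support (fun m : ℤ =>
        if m % ((2*p : ℕ):ℤ) = (1 + d*(p:ℤ)) % ((2*p : ℕ):ℤ) then
          (m:ℂ)^1 * Complex.exp ((π:ℂ) * I * (w₁/(p:ℂ)) * ((2*p : ℕ):ℂ) * (m:ℂ)^2 / ((2*p : ℕ):ℂ)^2)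
        else 0) ⊆ Set.range (fun k : ℤ => 1+d*(p:ℤ)+2*(p:ℤ)*k) := by
      intro m hm
      have hcond : m % ((2*p : ℕ):ℤ) = (1 + d*(p:ℤ)) % ((2*p : ℕ):ℤ) := by
        by_contra hc
        exact hm (if_neg hc)
      have hdvd : ((2*p : ℕ):ℤ) ∣ (1 + d*(p:ℤ)) - m := Int.ModEq.dvd hcond
      obtain ⟨k, hk⟩ := hdvd
      refine ⟨-k, ?_⟩
      have hcast : ((2*p : ℕ):ℤ) = 2*(p:ℤ) := by push_cast; ring
      rw [hcast] at hk
      linear_combination hk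
    rw [← Function.Injective.tsum_eq hinj hsupp]
    refine tsum_congr fun k => ?_
    have hcond : (1+d*(p:ℤ)+2*(p:ℤ)*k) % ((2*p : ℕ):ℤ) = (1 + d*(p:ℤ)) % ((2*p : ℕ):ℤ) := by
      rw [show ((2*p : ℕ):ℤ) = 2*(p:ℤ) by push_cast; ring]
      apply Int.add_mul_emod_self_left
    rw [if_pos hcond]
    unfold G1
    rw [pow_one, show ((2*p : ℕ):ℂ) = 2*(p:ℂ) by push_cast; ring]
    have harg : (π:ℂ) * I * (w₁/(p:ℂ)) * (2*(p:ℂ)) * ((1+d*(p:ℤ)+2*(p:ℤ)*k : ℤ):ℂ)^2 / (2*(p:ℂ))^2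
        = (π:ℂ) * I * w₁ * ((1+d*(p:ℤ)+2*(p:ℤ)*k : ℤ):ℂ)^2 / (2*(p:ℂ)^2) := by
      field_simp
    rw [harg]
  have hSh2 : ∀ d : ℤ, ShTheta 1 (6*p) (3 + 3*d*(p:ℤ)) (6*p) (w₂/(p:ℂ))
      = ∑' k : ℤ, 3 * G2 p w₂ (1+d*(p:ℤ)+2*(p:ℤ)*k) := by
    intro d
    rw [ShTheta]
    have hinj : Function.Injective (fun k : ℤ => 3+3*d*(p:ℤ)+6*(p:ℤ)*k) := by
      intro a b h
      simp only at h
      have h2 : (6*(p:ℤ)) * a = (6*(p:ℤ)) * b := by linarith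
      exact mul_left_cancel₀ (by omega : (6*(p:ℤ)) ≠ 0) h2
    have hsupp : Function.support (fun m : ℤ =>
        if m % ((6*p : ℕ):ℤ) = (3 + 3*d*(p:ℤ)) % ((6*p : ℕ):ℤ) then
          (m:ℂ)^1 * Complex.exp ((π:ℂ) * I * (w₂/(p:ℂ)) * ((6*p : ℕ):ℂ) * (m:ℂ)^2 / ((6*p : ℕ):ℂ)^2)
        else 0) ⊆ Set.range (fun k : ℤ => 3+3*d*(p:ℤ)+6*(p:ℤ)*k) := by
      intro m hm
      have hcond : m % ((6*p : ℕ):ℤ) = (3 + 3*d*(p:ℤ)) % ((6*p : ℕ):ℤ) := by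
        by_contra hc
        exact hm (if_neg hc)
      have hdvd : ((6*p : ℕ):ℤ) ∣ (3 + 3*d*(p:ℤ)) - m := Int.ModEq.dvd hcond
      obtain ⟨k, hk⟩ := hdvd
      refine ⟨-k, ?_⟩
      have hcast : ((6*p : ℕ):ℤ) = 6*(p:ℤ) := by push_cast; ring
      rw [hcast] at hk
      linear_combination hk
    rw [← Function.Injective.tsum_eq hinj hsupp]
    refine tsum_congr fun k => ?_
    have hcond : (3+3*d*(p:ℤ)+6*(p:ℤ)*k) % ((6*p : ℕ):ℤ) = (3 + 3*d*(p:ℤ)) % ((6*p : ℕ):ℤ) := by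
      rw [show ((6*p : ℕ):ℤ) = 6*(p:ℤ) by push_cast; ring]
      apply Int.add_mul_emod_self_left
    rw [if_pos hcond]
    unfold G2
    rw [pow_one]
    rw [show ((3+3*d*(p:ℤ)+6*(p:ℤ)*k : ℤ):ℂ) = 3*((1+d*(p:ℤ)+2*(p:ℤ)*k : ℤ):ℂ) by push_cast; ring]
    rw [show ((6*p : ℕ):ℂ) = 6*(p:ℂ) by push_cast; ring]
    rw [show (π:ℂ) * I * (w₂/(p:ℂ)) * (6*(p:ℂ)) * ((3*((1+d*(p:ℤ)+2*(p:ℤ)*k : ℤ):ℂ)))^2 / (6*(p:ℂ))^2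
        = 3 * (π:ℂ) * I * w₂ * (((1+d*(p:ℤ)+2*(p:ℤ)*k : ℤ):ℂ))^2 / (2*(p:ℂ)^2) by
          field_simp [hq]
          ring]
    ring
  -- Step 6 : product of two progression sums
  have hTd : ∀ d : ℤ,
      (∑' k : ℤ, G1 p w₁ (1+d*(p:ℤ)+2*(p:ℤ)*k)) * (∑' k : ℤ, 3 * G2 p w₂ (1+d*(p:ℤ)+2*(p:ℤ)*k))
      = 3 * ∑' z : ℤ × ℤ, G1 p w₁ (1+d*(p:ℤ)+2*(p:ℤ)*z.1) * G2 p w₂ (1+d*(p:ℤ)+2*(p:ℤ)*z.2) := by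
    intro d
    have hu : Function.Injective (fun k : ℤ => 1+d*(p:ℤ)+2*(p:ℤ)*k) := by
      intro a b h
      simp only at h
      have h2 : (2*(p:ℤ)) * a = (2*(p:ℤ)) * b := by linarith
      exact mul_left_cancel₀ (by omega : (2*(p:ℤ)) ≠ 0) h2
    have hA : Summable (fun k : ℤ => ‖G1 p w₁ (1+d*(p:ℤ)+2*(p:ℤ)*k)‖) := hg1n.comp_injective hu
    have hB : Summable (fun k : ℤ => ‖G2 p w₂ (1+d*(p:ℤ)+2*(p:ℤ)*k)‖) := hg2n.comp_injective hu
    rw [tsum_mul_left, mul_left_comm, tsum_mul_tsum_of_summable_norm hA hB]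
  -- Step 7 : assemble
  have hR : (∑ δ ∈ Finset.range 2,
        ShTheta 1 (2*p) (1 + (δ:ℤ)*p) (2*p) (w₁/(p:ℂ)) *
        ShTheta 1 (6*p) (3 + 3*(δ:ℤ)*p) (6*p) (w₂/(p:ℂ)))
      = 3 * (∑' z : ℤ × ℤ, G1 p w₁ (1+2*(p:ℤ)*z.1) * G2 p w₂ (1+2*(p:ℤ)*z.2))
      + 3 * (∑' z : ℤ × ℤ, G1 p w₁ (1+(p:ℤ)+2*(p:ℤ)*z.1) * G2 p w₂ (1+(p:ℤ)+2*(p:ℤ)*z.2)) := by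
    rw [Finset.sum_range_succ, Finset.sum_range_one]
    rw [hSh1 ((0:ℕ):ℤ), hSh2 ((0:ℕ):ℤ), hSh1 ((1:ℕ):ℤ), hSh2 ((1:ℕ):ℤ),
        hTd ((0:ℕ):ℤ), hTd ((1:ℕ):ℤ)]
    simp only [Nat.cast_zero, Nat.cast_one, zero_mul, one_mul, add_zero]
  rw [e1, e2, e3, hzero, h13, hsplit, hR]
  ring





end QMF
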